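/- If Θ̂ maximizes Θ ↦ log det Θ − tr(ΘS) − ρ Σ_{h,k} |θ_{hk}| over positive definite symmetric matrices, where S is positive semidefinite with positive diagonal and ρ > 0, then the diagonal of Θ̂^{-1} satisfies (Θ̂^{-1})_{hh} = s_{hh} + ρ for all h, and consequently tr(Θ̂^{-1}) = tr(S) + pρ. -/

import Mathlib

open Matrix

private lemma glasso_quad_smul (p : ℕ) (A : Matrix (Fin p) (Fin p) ℝ) (x : Fin p → ℝ) (c : ℝ) :
    (c • x) ⬝ᵥ A *ᵥ (c • x) = c^2 * (x ⬝ᵥ A *ᵥ x) := by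
  rw [smul_dotProduct, mulVec_smul, dotProduct_smul]
  simp only [smul_eq_mul]
  ring

private lemma glasso_posdef_perturb (p : ℕ) (Θ : Matrix (Fin p) (Fin p) ℝ) (hΘ : Θ.PosDef)
    (h : Fin p) :
    ∀ᶠ t in nhds (0:ℝ), (Θ + t • Matrix.single h h (1:ℝ)).PosDef := by
  have : Nonempty (Fin p) := ⟨h⟩
  have hq : Continuous fun x : Fin p → ℝ => x ⬝ᵥ Θ *ᵥ x := by
    simp only [dotProduct, mulVec]
    exact continuous_finset_sum _ fun i _ => (continuous_apply i).mul
      (continuous_finset_sum _ fun j _ => continuous_const.mul (continuous_apply j))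
  have hsph : (Metric.sphere (0 : Fin p → ℝ) 1).Nonempty :=
    NormedSpace.sphere_nonempty.mpr zero_le_one
  obtain ⟨x₀, hx₀, hmin⟩ := (isCompact_sphere (0 : Fin p → ℝ) 1).exists_isMinOn hsph
    (hq.continuousOn)
  set m := x₀ ⬝ᵥ Θ *ᵥ x₀ with hm
  have hx₀ne : x₀ ≠ 0 := by
    intro hc; rw [hc] at hx₀; simp at hx₀
  have hmpos : 0 < m := by
    have := hΘ.dotProduct_mulVec_pos hx₀ne
    simpa using this
  have hlb : ∀ x : Fin p → ℝ, m * ‖x‖^2 ≤ x ⬝ᵥ Θ *ᵥ x := by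
    intro x
    rcases eq_or_ne x 0 with rfl | hx
    · simp
    · have hnx : (0:ℝ) < ‖x‖ := norm_pos_iff.mpr hx
      have h1 : ‖(‖x‖⁻¹ • x)‖ = 1 := by
        rw [norm_smul, norm_inv, norm_norm, inv_mul_cancel₀ hnx.ne']
      have := hmin (by simpa [Metric.mem_sphere, dist_zero_right] using h1 :
        (‖x‖⁻¹ • x) ∈ Metric.sphere (0 : Fin p → ℝ) 1)
      have h2 : (‖x‖⁻¹ • x) ⬝ᵥ Θ *ᵥ (‖x‖⁻¹ • x) = (‖x‖⁻¹)^2 * (x ⬝ᵥ Θ *ᵥ x) :=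
        glasso_quad_smul p Θ x _
      have h3 : m ≤ (‖x‖⁻¹)^2 * (x ⬝ᵥ Θ *ᵥ x) := h2 ▸ this
      have h4 := mul_le_mul_of_nonneg_left h3 (sq_nonneg ‖x‖)
      calc m * ‖x‖^2 = ‖x‖^2 * m := by ring
      _ ≤ ‖x‖^2 * ((‖x‖⁻¹)^2 * (x ⬝ᵥ Θ *ᵥ x)) := h4
      _ = (x ⬝ᵥ Θ *ᵥ x) := by field_simp
  filter_upwards [Metric.ball_mem_nhds (0:ℝ) hmpos] with t ht
  rw [Metric.mem_ball, Real.dist_eq, sub_zero] at ht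
  rw [posDef_iff_dotProduct_mulVec]
  constructor
  · have h1 : (Matrix.single h h (1:ℝ)).IsHermitian := by
      show _ᴴ = _
      ext i j
      simp [conjTranspose_apply, Matrix.single, and_comm]
    have h2 := hΘ.1
    show _ᴴ = _
    rw [conjTranspose_add, h2, conjTranspose_smul]
    congr 1
    rw [h1]
    simp
  · intro x hx
    have hE : x ⬝ᵥ (Matrix.single h h (1:ℝ)) *ᵥ x = x h * x h := by
      simp [dotProduct, mulVec, Matrix.single, ite_and, Finset.mul_sum]
    have hnx : (0:ℝ) < ‖x‖ := norm_pos_iff.mpr hx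
    have hxh : |x h| ≤ ‖x‖ := by
      simpa using norm_le_pi_norm x h
    have : x ⬝ᵥ (Θ + t • Matrix.single h h (1:ℝ)) *ᵥ x
        = x ⬝ᵥ Θ *ᵥ x + t * (x h * x h) := by
      rw [add_mulVec, dotProduct_add, smul_mulVec, dotProduct_smul, hE, smul_eq_mul]
    rw [show star x = x from star_trivial x, this]
    have hb : |t * (x h * x h)| ≤ |t| * ‖x‖^2 := by
      rw [abs_mul, abs_mul]
      have := mul_le_mul hxh hxh (abs_nonneg _) (norm_nonneg _)
      calc |t| * (|x h| * |x h|) ≤ |t| * (‖x‖ * ‖x‖) :=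
            mul_le_mul_of_nonneg_left this (abs_nonneg t)
      _ = |t| * ‖x‖^2 := by ring
    have h5 : m * ‖x‖^2 ≤ x ⬝ᵥ Θ *ᵥ x := hlb x
    nlinarith [neg_abs_le (t * (x h * x h)), mul_pos (sub_pos.mpr ht) (pow_pos hnx 2)]

private lemma glasso_det_perturb (p : ℕ) (Θ : Matrix (Fin p) (Fin p) ℝ) (h : Fin p) (t : ℝ) :
    (Θ + t • Matrix.single h h (1:ℝ)).det = Θ.det + t * Θ.adjugate h h := by
  have hrw : Θ + t • Matrix.single h h (1:ℝ)
      = updateRow Θ h (Θ h + t • (Pi.single h 1 : Fin p → ℝ)) := by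
    ext i j
    rcases eq_or_ne i h with rfl | hi
    · simp [updateRow_apply, Matrix.single, Pi.single_apply, eq_comm]
    · have : ¬(h = i) := fun hc => hi hc.symm
      simp [updateRow_apply, hi, Matrix.single, this]
  rw [hrw, det_updateRow_add, updateRow_eq_self, det_updateRow_smul,
    ← adjugate_apply]

private lemma glasso_trace_perturb (p : ℕ) (Θ S : Matrix (Fin p) (Fin p) ℝ) (h : Fin p) (t : ℝ) :
    ((Θ + t • Matrix.single h h (1:ℝ)) * S).trace = (Θ * S).trace + t * S h h := by
  rw [add_mul, trace_add, Matrix.smul_mul, trace_smul, smul_eq_mul]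
  congr 1
  congr 1
  simp [Matrix.trace, Matrix.diag, Matrix.mul_apply, Matrix.single, ite_and,
    Finset.sum_ite_eq, Finset.mul_sum]

private lemma glasso_pen_perturb (p : ℕ) (Θ : Matrix (Fin p) (Fin p) ℝ) (h : Fin p) (t : ℝ)
    (hpos : 0 < Θ h h) (ht : |t| < Θ h h) :
    ∑ i, ∑ k, |(Θ + t • Matrix.single h h (1:ℝ)) i k| = (∑ i, ∑ k, |Θ i k|) + t := by
  have key : ∀ i k, |(Θ + t • Matrix.single h h (1:ℝ)) i k|
      = |Θ i k| + (if i = h ∧ k = h then t else 0) := by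
    intro i k
    by_cases hik : i = h ∧ k = h
    · have h1 : 0 < Θ h h + t := by
        have := neg_abs_le t; linarith
      have e1 : (Θ + t • Matrix.single h h (1:ℝ)) i k = Θ h h + t := by
        rw [hik.1, hik.2]
        simp [Matrix.add_apply, Matrix.single]
      rw [e1, if_pos hik, hik.1, hik.2, abs_of_pos h1, abs_of_pos hpos]
    · have hnk : ¬(h = i ∧ h = k) := fun hc => hik ⟨hc.1.symm, hc.2.symm⟩
      simp [Matrix.add_apply, Matrix.single, hik, hnk]
  simp only [key, Finset.sum_add_distrib]
  congr 1
  simp [ite_and, Finset.sum_ite_eq]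

/-- if `Θ̂` maximizes `log det Θ - tr(ΘS) - ρ Σ_{h,k}|θ_{hk}|` (penalty on
all entries) over symmetric positive definite matrices, with `S` positive semidefinite
with positive diagonal and `ρ > 0`, then `(Θ̂⁻¹)_{hh} = s_{hh} + ρ` for all `h`, and
`tr(Θ̂⁻¹) = tr(S) + pρ`. -/
theorem glasso_diagonal_of_maximizer (p : ℕ) (S : Matrix (Fin p) (Fin p) ℝ)
    (hS : S.PosSemidef) (hdiag : ∀ h, 0 < S h h) (ρ : ℝ) (hρ : 0 < ρ)
    (Θhat : Matrix (Fin p) (Fin p) ℝ)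
    (hΘhat : Θhat ∈ {Θ : Matrix (Fin p) (Fin p) ℝ | Θ.PosDef ∧ Θ.IsSymm})
    (hmax : IsMaxOn (fun Θ : Matrix (Fin p) (Fin p) ℝ =>
        Real.log Θ.det - (Θ * S).trace - ρ * ∑ h, ∑ k, |Θ h k|)
      {Θ : Matrix (Fin p) (Fin p) ℝ | Θ.PosDef ∧ Θ.IsSymm} Θhat) :
    (∀ h, Θhat⁻¹ h h = S h h + ρ) ∧ Θhat⁻¹.trace = S.trace + p * ρ := by
  obtain ⟨hPD, hsym⟩ := hΘhat
  have hdet : 0 < Θhat.det := hPD.det_pos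
  have key : ∀ h, Θhat⁻¹ h h = S h h + ρ := by
    intro h
    set E := Matrix.single h h (1:ℝ) with hAE
    have hΘhh : 0 < Θhat h h := by
      have := hPD.dotProduct_mulVec_pos (x := Pi.single h 1) (by simp [Pi.single_eq_same, Function.ne_iff])
      simpa [dotProduct, mulVec, Pi.single_apply, Finset.mul_sum] using this
    set d := Θhat.det with hd
    set c := Θhat.adjugate h h with hc
    set g : ℝ → ℝ := fun t => Real.log (d + t * c) - t * (S h h + ρ) with hg
    -- local max of g at 0
    have hloc : IsLocalMax g 0 := by
      have hsymE : ∀ t : ℝ, (Θhat + t • E).IsSymm := by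
        intro t
        show _ᵀ = _
        rw [transpose_add, hsym, transpose_smul]
        congr 1
        ext i j
        simp [hAE, Matrix.single, and_comm]
      filter_upwards [glasso_posdef_perturb p Θhat hPD h,
        Metric.ball_mem_nhds (0:ℝ) hΘhh] with t hpd htb
      rw [Metric.mem_ball, Real.dist_eq, sub_zero] at htb
      have hmem : Θhat + t • E ∈ {Θ : Matrix (Fin p) (Fin p) ℝ | Θ.PosDef ∧ Θ.IsSymm} :=
        ⟨hpd, hsymE t⟩
      have h1 := hmax hmem
      simp only [Set.mem_setOf_eq] at h1
      have hdet' := glasso_det_perturb p Θhat h t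
      have htr := glasso_trace_perturb p Θhat S h t
      have hpen := glasso_pen_perturb p Θhat h t hΘhh htb
      have hg0 : g 0 = Real.log d := by simp [hg]
      have : Real.log (d + t * c) - ((Θhat * S).trace + t * S h h)
          - ρ * ((∑ i, ∑ k, |Θhat i k|) + t)
          ≤ Real.log d - (Θhat * S).trace - ρ * ∑ i, ∑ k, |Θhat i k| := by
        calc _ = Real.log (Θhat + t • E).det - ((Θhat + t • E) * S).trace
              - ρ * ∑ i, ∑ k, |(Θhat + t • E) i k| := by rw [hdet', htr, hpen]
        _ ≤ _ := h1
      simp only [hg, zero_mul, add_zero, sub_zero]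
      linarith
    -- derivative of g at 0
    have hne : d + 0 * c ≠ 0 := by simpa using hdet.ne'
    have hder : HasDerivAt g (d⁻¹ * c - (S h h + ρ)) 0 := by
      have h1 : HasDerivAt (fun t : ℝ => d + t * c) c 0 := by
        simpa using ((hasDerivAt_id (0:ℝ)).mul_const c).const_add d
      have h2 : HasDerivAt (fun t : ℝ => Real.log (d + t * c)) ((d + 0 * c)⁻¹ * c) 0 :=
        by have := (Real.hasDerivAt_log hne).comp (0:ℝ) h1; exact this
      have h3 : HasDerivAt (fun t : ℝ => t * (S h h + ρ)) (S h h + ρ) 0 := by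
        simpa using (hasDerivAt_id (0:ℝ)).mul_const (S h h + ρ)
      have h4 := h2.sub h3
      rw [zero_mul, add_zero] at h4
      exact h4
    have hder0 : d⁻¹ * c - (S h h + ρ) = 0 := by
      rw [← hder.deriv]
      exact hloc.deriv_eq_zero
    have hinv : Θhat⁻¹ h h = d⁻¹ * c := by
      rw [Matrix.inv_def, Ring.inverse_eq_inv']
      simp [hd, hc]
    rw [hinv]
    linarith
  refine ⟨key, ?_⟩
  have : Θhat⁻¹.trace = ∑ h, Θhat⁻¹ h h := rfl
  rw [this]
  simp only [key]
  rw [Finset.sum_add_distrib]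
  simp [Matrix.trace, Matrix.diag, mul_comm]
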